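/- Let E be an arbitrary set. The maps I ↦ Î := {Z(f) : f ∈ I} and Φ ↦ Φ̌ := {f ∈ C^∞(ℝ^E) : Z(f) ∈ Φ} restrict to mutually inverse bijections between the set of all prime proper filters of zerosets of ℝ^E and the set of all prime, proper, C^∞-radical ideals of C^∞(ℝ^E). In particular: if Φ is a prime proper filter of zerosets then Φ̌ is a prime C^∞-radical proper ideal, and if I is a prime C^∞-radical proper ideal then Î is a prime proper filter of zerosets. -/
import Mathlib


noncomputable section

open Set

/-- The continuous linear "restriction" map `ℝ^t → ℝ^s` for `s ⊆ t`. -/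
def restrCLM {E : Type} (s t : Finset E) (h : s ⊆ t) : (↥t → ℝ) →L[ℝ] (↥s → ℝ) :=
  LinearMap.toContinuousLinearMap
    (LinearMap.funLeft ℝ ℝ (fun i : ↥s => (⟨i.1, h i.2⟩ : ↥t)))

/-- A function `f : ℝ^E → ℝ` is (`C^∞`-)smooth iff it factors through the projection onto
finitely many coordinates via an infinitely differentiable function. -/
def IsCinf {E : Type} (f : (E → ℝ) → ℝ) : Prop :=
  ∃ (s : Finset E) (g : (↥s → ℝ) → ℝ),
    ContDiff ℝ (⊤ : ℕ∞) g ∧ ∀ v : E → ℝ, f v = g (fun i => v i.1)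

theorem IsCinf.enlarge {E : Type} {f : (E → ℝ) → ℝ} {s : Finset E} {g : (↥s → ℝ) → ℝ}
    (hg : ContDiff ℝ (⊤ : ℕ∞) g) (hfg : ∀ v, f v = g (fun i => v i.1))
    (t : Finset E) (hst : s ⊆ t) :
    ∃ g' : (↥t → ℝ) → ℝ, ContDiff ℝ (⊤ : ℕ∞) g' ∧ ∀ v, f v = g' (fun i => v i.1) := by
  refine ⟨g ∘ restrCLM s t hst, hg.comp (restrCLM s t hst).contDiff, fun v => ?_⟩
  have h1 : (restrCLM s t hst) (fun i : ↥t => v i.1) = fun i : ↥s => v i.1 := rfl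
  simp only [Function.comp_apply, h1]
  exact hfg v

/-- The ring `C^∞(ℝ^E)` of smooth functions `ℝ^E → ℝ`, as a subring of the ring of all
functions `ℝ^E → ℝ` with pointwise operations. -/
def Cinf (E : Type) : Subring ((E → ℝ) → ℝ) where
  carrier := {f | IsCinf f}
  zero_mem' := ⟨∅, fun _ => 0, contDiff_const, fun _ => rfl⟩
  one_mem' := ⟨∅, fun _ => 1, contDiff_const, fun _ => rfl⟩
  neg_mem' := by
    rintro f ⟨s, g, hg, hfg⟩
    exact ⟨s, -g, hg.neg, fun v => by simp [hfg v]⟩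
  add_mem' := by
    rintro f₁ f₂ ⟨s, g₁, hg₁, hfg₁⟩ ⟨t, g₂, hg₂, hfg₂⟩
    haveI := Classical.decEq E
    obtain ⟨g₁', hg₁', hfg₁'⟩ := IsCinf.enlarge hg₁ hfg₁ (s ∪ t) Finset.subset_union_left
    obtain ⟨g₂', hg₂', hfg₂'⟩ := IsCinf.enlarge hg₂ hfg₂ (s ∪ t) Finset.subset_union_right
    exact ⟨s ∪ t, g₁' + g₂', hg₁'.add hg₂', fun v => by
      simp only [Pi.add_apply, hfg₁' v, hfg₂' v]⟩
  mul_mem' := by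
    rintro f₁ f₂ ⟨s, g₁, hg₁, hfg₁⟩ ⟨t, g₂, hg₂, hfg₂⟩
    haveI := Classical.decEq E
    obtain ⟨g₁', hg₁', hfg₁'⟩ := IsCinf.enlarge hg₁ hfg₁ (s ∪ t) Finset.subset_union_left
    obtain ⟨g₂', hg₂', hfg₂'⟩ := IsCinf.enlarge hg₂ hfg₂ (s ∪ t) Finset.subset_union_right
    exact ⟨s ∪ t, g₁' * g₂', hg₁'.mul hg₂', fun v => by
      simp only [Pi.mul_apply, hfg₁' v, hfg₂' v]⟩

/-- The zeroset of a smooth function on `ℝ^E`. -/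
def Z {E : Type} (f : Cinf E) : Set (E → ℝ) := {v | (f : (E → ℝ) → ℝ) v = 0}

/-- An ideal `I ⊆ C^∞(ℝ^E)` is `C^∞`-radical iff it contains every function whose zeroset
contains the zeroset of some member of `I`. -/
def IsCinfRadical {E : Type} (I : Ideal (Cinf E)) : Prop :=
  ∀ g : Cinf E, (∃ f ∈ I, Z f ⊆ Z g) → g ∈ I

/-- The collection of zerosets of `ℝ^E`. -/
def zeroSets (E : Type) : Set (Set (E → ℝ)) := {X | ∃ f : Cinf E, X = Z f}

/-- A filter of zerosets of `ℝ^E`. -/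
def IsZFilter {E : Type} (Φ : Set (Set (E → ℝ))) : Prop :=
  Φ ⊆ zeroSets E ∧ (Set.univ : Set (E → ℝ)) ∈ Φ ∧
    (∀ F ∈ Φ, ∀ G ∈ Φ, F ∩ G ∈ Φ) ∧
    (∀ F ∈ Φ, ∀ H ∈ zeroSets E, F ⊆ H → H ∈ Φ)

/-- `Ŝ`: the set of zerosets of members of a set `S ⊆ C^∞(ℝ^E)`. -/
def hatSet {E : Type} (S : Set (Cinf E)) : Set (Set (E → ℝ)) := {X | ∃ f ∈ S, X = Z f}

/-- `Î`: the set of zerosets of members of the ideal `I`. -/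
def hatI {E : Type} (I : Ideal (Cinf E)) : Set (Set (E → ℝ)) := hatSet (I : Set (Cinf E))

/-- `Φ̌`: the set of smooth functions whose zeroset belongs to `Φ`. -/
def checkSet {E : Type} (Φ : Set (Set (E → ℝ))) : Set (Cinf E) := {f : Cinf E | Z f ∈ Φ}

end

/-- A prime proper filter of zerosets: a proper filter of zerosets `Φ` such that whenever
a union of two zerosets lies in `Φ`, one of them lies in `Φ`. -/
def IsPrimeZFilter {E : Type} (Φ : Set (Set (E → ℝ))) : Prop :=
  IsZFilter Φ ∧ (∅ : Set (E → ℝ)) ∉ Φ ∧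
    ∀ F ∈ zeroSets E, ∀ G ∈ zeroSets E, F ∪ G ∈ Φ → F ∈ Φ ∨ G ∈ Φ

section Aux
open Set
variable {E : Type}

lemma Z_zero' : Z (0 : Cinf E) = Set.univ := by
  ext v; simp [Z]

lemma Z_one' : Z (1 : Cinf E) = (∅ : Set (E → ℝ)) := by
  ext v; simp [Z]

lemma Z_mul' (f g : Cinf E) : Z (f * g) = Z f ∪ Z g := by
  ext v; simp [Z, mul_eq_zero]

lemma Z_sq_add_sq (f g : Cinf E) : Z (f * f + g * g) = Z f ∩ Z g := by
  ext v
  simp only [Z, Set.mem_setOf_eq, Set.mem_inter_iff, Subring.coe_add, Subring.coe_mul,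
    Pi.add_apply, Pi.mul_apply]
  constructor
  · intro h
    have h1 := (add_eq_zero_iff_of_nonneg (mul_self_nonneg _) (mul_self_nonneg _)).1 h
    exact ⟨mul_self_eq_zero.1 h1.1, mul_self_eq_zero.1 h1.2⟩
  · rintro ⟨h1, h2⟩; simp [h1, h2]

lemma Z_inter_subset_add (f g : Cinf E) : Z f ∩ Z g ⊆ Z (f + g) := by
  rintro v ⟨h1, h2⟩
  simp only [Z, Set.mem_setOf_eq] at h1 h2 ⊢
  simp [h1, h2]

lemma Z_mem_zeroSets (f : Cinf E) : Z f ∈ zeroSets E := ⟨f, rfl⟩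

end Aux

/-- `I ↦ Î` and `Φ ↦ Φ̌` restrict to mutually inverse bijections
between prime proper filters of zerosets of `ℝ^E` and prime proper `C^∞`-radical ideals
of `C^∞(ℝ^E)`. -/
theorem statement12 (E : Type) :
    (∀ Φ : Set (Set (E → ℝ)), IsPrimeZFilter Φ →
      ∃ J : Ideal (Cinf E), (J : Set (Cinf E)) = checkSet Φ ∧ J.IsPrime ∧
        IsCinfRadical J ∧ hatI J = Φ) ∧
    (∀ I : Ideal (Cinf E), I.IsPrime → IsCinfRadical I →
      IsPrimeZFilter (hatI I) ∧ checkSet (hatI I) = (I : Set (Cinf E))) := by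
  constructor
  · rintro Φ ⟨⟨hsub, huniv, hinter, hup⟩, hempty, hprime⟩
    refine ⟨{ carrier := checkSet Φ
              zero_mem' := by simpa [checkSet, Z_zero'] using huniv
              add_mem' := by
                intro f g hf hg
                exact hup _ (by simpa [Z_sq_add_sq] using hinter _ hf _ hg) _
                  (Z_mem_zeroSets _) (by simpa [Z_sq_add_sq] using Z_inter_subset_add f g)
              smul_mem' := by
                intro c f hf
                refine hup _ hf _ (Z_mem_zeroSets (c * f)) ?_
                rw [smul_eq_mul, Z_mul']
                exact Set.subset_union_right }, rfl, ?_, ?_, ?_⟩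
    · refine Ideal.isPrime_iff.mpr ⟨?_, ?_⟩
      · intro h
        have h1 : (1 : Cinf E) ∈ checkSet Φ := by
          have := h ▸ (Submodule.mem_top : (1 : Cinf E) ∈ (⊤ : Ideal (Cinf E)))
          exact this
        exact hempty (by simpa [checkSet, Z_one'] using h1)
      · intro f g hfg
        have : Z f ∪ Z g ∈ Φ := by rwa [← Z_mul']
        exact hprime _ (Z_mem_zeroSets f) _ (Z_mem_zeroSets g) this
    · rintro g ⟨f, hf, hsub'⟩
      exact hup _ hf _ (Z_mem_zeroSets g) hsub'
    · ext X
      constructor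
      · rintro ⟨f, hf, rfl⟩; exact hf
      · intro hX
        obtain ⟨f, rfl⟩ := hsub hX
        exact ⟨f, hX, rfl⟩
  · intro I hIp hIr
    have hUp : ∀ F ∈ hatI I, ∀ H ∈ zeroSets E, F ⊆ H → H ∈ hatI I := by
      rintro F ⟨f, hf, rfl⟩ H ⟨h, rfl⟩ hFH
      exact ⟨h, hIr h ⟨f, hf, hFH⟩, rfl⟩
    refine ⟨⟨⟨?_, ⟨0, I.zero_mem, Z_zero'.symm⟩, ?_, hUp⟩, ?_, ?_⟩, ?_⟩
    · rintro X ⟨f, _, rfl⟩; exact ⟨f, rfl⟩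
    · rintro F ⟨f, hf, rfl⟩ G ⟨g, hg, rfl⟩
      exact ⟨f * f + g * g, I.add_mem (I.mul_mem_left f hf) (I.mul_mem_left g hg),
        (Z_sq_add_sq f g).symm⟩
    · rintro ⟨f, hf, hZ⟩
      have h1 : (1 : Cinf E) ∈ I := hIr 1 ⟨f, hf, hZ ▸ Set.empty_subset _⟩
      exact hIp.ne_top ((Ideal.eq_top_iff_one I).2 h1)
    · rintro F ⟨f, rfl⟩ G ⟨g, rfl⟩ ⟨h, hh, hZ⟩
      have hfg : f * g ∈ I := hIr (f * g) ⟨h, hh, by rw [Z_mul', ← hZ]⟩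
      rcases hIp.mem_or_mem hfg with hf | hg
      · exact Or.inl ⟨f, hf, rfl⟩
      · exact Or.inr ⟨g, hg, rfl⟩
    · ext f
      constructor
      · rintro ⟨g, hg, hZ⟩
        exact hIr f ⟨g, hg, le_of_eq hZ.symm⟩
      · intro hf; exact ⟨f, hf, rfl⟩
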